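/- arXiv:1809.07118 — 7 statements merged into one kernel-verified Lean document; each statement's English description precedes it below -/
import Mathlib

section
/- A ℤ-graded ring R is strongly graded if and only if there exist a partition of unity of type (1,−1) and a partition of unity of type (−1,1) in R. -/
/-- A partition of unity of type `(n, -n)` in the `ℤ`-graded ring `R`:
a finite family `α₁, …, α_N ∈ R_n`, `β₁, …, β_N ∈ R_{-n}` with `∑ j, α j * β j = 1`. -/
def HasPartitionOfUnity {R : Type*} [Ring R] (𝒜 : ℤ → AddSubgroup R) (n : ℤ) : Prop :=
  ∃ (N : ℕ) (α β : Fin N → R),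
    (∀ j, α j ∈ 𝒜 n) ∧ (∀ j, β j ∈ 𝒜 (-n)) ∧ ∑ j, α j * β j = 1

lemma hasPartitionOfUnity_zero {R : Type*} [Ring R] (𝒜 : ℤ → AddSubgroup R)
    [GradedRing 𝒜] : HasPartitionOfUnity 𝒜 0 := by
  refine ⟨1, fun _ => 1, fun _ => 1, fun _ => SetLike.one_mem_graded 𝒜,
    fun _ => by simpa using SetLike.one_mem_graded 𝒜, by simp⟩

lemma hasPartitionOfUnity_add {R : Type*} [Ring R] (𝒜 : ℤ → AddSubgroup R)
    [GradedRing 𝒜] {n m : ℤ} (hn : HasPartitionOfUnity 𝒜 n)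
    (hm : HasPartitionOfUnity 𝒜 m) : HasPartitionOfUnity 𝒜 (n + m) := by
  obtain ⟨N, α, β, hα, hβ, hαβ⟩ := hn
  obtain ⟨M, γ, δ, hγ, hδ, hγδ⟩ := hm
  refine ⟨N * M, fun j => γ (finProdFinEquiv.symm j).2 * α (finProdFinEquiv.symm j).1,
    fun j => β (finProdFinEquiv.symm j).1 * δ (finProdFinEquiv.symm j).2, ?_, ?_, ?_⟩
  · intro j
    have := SetLike.mul_mem_graded (hγ (finProdFinEquiv.symm j).2)
      (hα (finProdFinEquiv.symm j).1)
    rwa [add_comm m n] at this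
  · intro j
    have := SetLike.mul_mem_graded (hβ (finProdFinEquiv.symm j).1)
      (hδ (finProdFinEquiv.symm j).2)
    rwa [← neg_add] at this
  · rw [← finProdFinEquiv.sum_comp (M := R)]
    simp only [Equiv.symm_apply_apply]
    rw [Fintype.sum_prod_type]
    calc ∑ i : Fin N, ∑ k : Fin M, γ k * α i * (β i * δ k)
        = ∑ k : Fin M, γ k * (∑ i : Fin N, α i * β i) * δ k := by
          rw [Finset.sum_comm]
          simp [Finset.mul_sum, Finset.sum_mul, mul_assoc]
      _ = 1 := by rw [hαβ]; simpa using hγδ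

/-- **Corollary.**  A `ℤ`-graded ring is strongly graded (i.e. possesses partitions of
unity of type `(n, -n)` for every `n : ℤ`) if and only if it possesses partitions of
unity of types `(1, -1)` and `(-1, 1)`. -/
theorem stronglyGraded_iff_pou_one {R : Type*} [Ring R] (𝒜 : ℤ → AddSubgroup R)
    [GradedRing 𝒜] :
    (∀ n : ℤ, HasPartitionOfUnity 𝒜 n) ↔
      HasPartitionOfUnity 𝒜 1 ∧ HasPartitionOfUnity 𝒜 (-1) := by
  refine ⟨fun h => ⟨h 1, h (-1)⟩, fun ⟨h1, hm1⟩ n => ?_⟩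
  induction n using Int.induction_on with
  | zero => exact hasPartitionOfUnity_zero 𝒜
  | succ k ih => exact hasPartitionOfUnity_add 𝒜 ih h1
  | pred k ih => exact hasPartitionOfUnity_add 𝒜 ih hm1
end

section
/- Let R be a strongly ℤ-graded ring and let P be the non-negative part of R. Then the inclusion P ↪ R is an epimorphism in the category of unital rings: for any ring S and any ring homomorphisms f, g : R → S that agree on all elements of P, one has f = g. -/
/-- **Lemma.**  Let `R` be a strongly `ℤ`-graded ring and `P = ⨁_{k ≥ 0} R_k` its
non-negative part, i.e. the set of elements all of whose homogeneous components in
negative degrees vanish.  Then the inclusion `P ⊆ R` is an epimorphism of unital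
rings: any two ring homomorphisms `f, g : R → S` agreeing on `P` are equal. -/
theorem nonnegPart_inclusion_epi {R : Type*} [Ring R] (𝒜 : ℤ → AddSubgroup R)
    [GradedRing 𝒜] (hstrong : ∀ n : ℤ, HasPartitionOfUnity 𝒜 n)
    {S : Type*} [Ring S] (f g : R →+* S)
    (hfg : ∀ x : R, (∀ i : ℤ, i < 0 → (DirectSum.decompose 𝒜 x i : R) = 0) → f x = g x) :
    f = g := by
  have hP : ∀ (i : ℤ), 0 ≤ i → ∀ x ∈ 𝒜 i, f x = g x := by
    intro i hi x hx
    apply hfg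
    intro j hj
    exact DirectSum.decompose_of_mem_ne 𝒜 hx (by omega)
  have hhom : ∀ (i : ℤ), ∀ x ∈ 𝒜 i, f x = g x := by
    intro i x hx
    rcases le_or_gt 0 i with hi | hi
    · exact hP i hi x hx
    · obtain ⟨N, α, β, hα, hβ, hsum⟩ := hstrong (-i)
      have hg1 : g (∑ j, α j * β j) = 1 := by rw [hsum, g.map_one]
      have h1 : f x = ∑ j, f x * (g (α j) * g (β j)) := by
        calc f x = f x * g (∑ j, α j * β j) := by rw [hg1, mul_one]
          _ = ∑ j, f x * (g (α j) * g (β j)) := by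
              rw [map_sum, Finset.mul_sum]
              exact Finset.sum_congr rfl fun j _ => by rw [g.map_mul]
      have h2 : ∀ j, f x * (g (α j) * g (β j)) = g (x * α j * β j) := by
        intro j
        have hgα : g (α j) = f (α j) := (hP (-i) (by omega) _ (hα j)).symm
        have hmem : x * α j ∈ 𝒜 0 := by
          have h := SetLike.mul_mem_graded hx (hα j)
          simpa using h
        rw [hgα, ← mul_assoc, ← f.map_mul, hP 0 le_rfl _ hmem, ← g.map_mul]
      calc f x = ∑ j, f x * (g (α j) * g (β j)) := h1
        _ = ∑ j, g (x * α j * β j) := Finset.sum_congr rfl fun j _ => h2 j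
        _ = g (∑ j, x * α j * β j) := (map_sum g _ _).symm
        _ = g x := by
            rw [show (∑ j, x * α j * β j) = x * ∑ j, α j * β j by
              rw [Finset.mul_sum]; exact Finset.sum_congr rfl fun j _ => (mul_assoc ..),
              hsum, mul_one]
  classical
  ext x
  conv_lhs => rw [← DirectSum.sum_support_decompose 𝒜 x]
  conv_rhs => rw [← DirectSum.sum_support_decompose 𝒜 x]
  rw [map_sum, map_sum]
  exact Finset.sum_congr rfl fun i _ => hhom i _ (SetLike.coe_mem _)
end

section
/- Let R be a ℤ-graded ring. If R admits a partition of unity of type (1,−1), then for every n ≥ 1 the homogeneous component R_{−n} is a finitely generated projective left R_0-module. If R admits a partition of unity of type (−1,1), then for every n ≥ 1 the homogeneous component R_n is a finitely generated projective left R_0-module. -/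
/-- The left `R₀`-module structure on the homogeneous component `R_i` of an internally
graded ring, given by multiplication. -/
noncomputable def gradeZeroModule {R : Type*} [Ring R] (𝒜 : ℤ → AddSubgroup R)
    [GradedRing 𝒜] (i : ℤ) : Module ↥(𝒜 0) ↥(𝒜 i) :=
  DirectSum.instModuleOfNat (A := fun i => ↥(𝒜 i))

section
variable {R : Type*} [Ring R] (𝒜 : ℤ → AddSubgroup R) [GradedRing 𝒜]

noncomputable local instance instGZM (i : ℤ) : Module ↥(𝒜 0) ↥(𝒜 i) := gradeZeroModule 𝒜 i

theorem coe_smul' (i : ℤ) (a : ↥(𝒜 0)) (x : ↥(𝒜 i)) : ((a • x : ↥(𝒜 i)) : R) = a * x := by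
  have h := DirectSum.of_zero_smul (A := fun j => ↥(𝒜 j)) a x
  have h2 := congrArg (DirectSum.coeRingHom 𝒜) h
  rw [DirectSum.coeRingHom_of, map_mul, DirectSum.coeRingHom_of, DirectSum.coeRingHom_of] at h2
  exact (by unfold instGZM gradeZeroModule; exact h2)

omit [GradedRing 𝒜] in
theorem pou_mul {a b : ℤ} (ha : HasPartitionOfUnity 𝒜 a) (hb : HasPartitionOfUnity 𝒜 b)
    (hmul : ∀ i j : ℤ, ∀ x ∈ 𝒜 i, ∀ y ∈ 𝒜 j, x * y ∈ 𝒜 (i + j)) :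
    HasPartitionOfUnity 𝒜 (a + b) := by
  obtain ⟨N, α, β, hα, hβ, hs⟩ := ha
  obtain ⟨M, γ, δ, hγ, hδ, hs'⟩ := hb
  refine ⟨N * M, fun k => α ((finProdFinEquiv.symm k).1) * γ ((finProdFinEquiv.symm k).2),
    fun k => δ ((finProdFinEquiv.symm k).2) * β ((finProdFinEquiv.symm k).1), ?_, ?_, ?_⟩
  · intro k; exact hmul a b _ (hα _) _ (hγ _)
  · intro k
    have := hmul (-b) (-a) (δ (finProdFinEquiv.symm k).2) (hδ _) (β (finProdFinEquiv.symm k).1)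
      (hβ _)
    rwa [show -b + -a = -(a + b) by ring] at this
  · rw [← Equiv.sum_comp (finProdFinEquiv (m := N) (n := M))]
    simp only [Equiv.symm_apply_apply]
    rw [Fintype.sum_prod_type]
    have key : ∀ j : Fin N, ∑ k : Fin M, α j * γ k * (δ k * β j) = α j * β j := by
      intro j
      have : ∑ k : Fin M, α j * γ k * (δ k * β j) = α j * (∑ k : Fin M, γ k * δ k) * β j := by
        rw [Finset.mul_sum, Finset.sum_mul]
        refine Finset.sum_congr rfl fun k _ => ?_
        simp [mul_assoc]
      rw [this, hs', mul_one]
    rw [Finset.sum_congr rfl fun j _ => key j, hs]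

theorem fg_proj_of_pou (i : ℤ) (h : HasPartitionOfUnity 𝒜 (-i)) :
    Module.Finite ↥(𝒜 0) ↥(𝒜 i) ∧ Module.Projective ↥(𝒜 0) ↥(𝒜 i) := by
  obtain ⟨N, α, β, hα, hβ, hs⟩ := h
  have hβ' : ∀ j, β j ∈ 𝒜 i := by simpa using hβ
  have hmem0 : ∀ j (x : ↥(𝒜 i)), (x : R) * α j ∈ 𝒜 0 := by
    intro j x
    have := SetLike.mul_mem_graded x.2 (hα j)
    simpa using this
  have hmemi : ∀ j (c : ↥(𝒜 0)), (c : R) * β j ∈ 𝒜 i := by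
    intro j c
    have := SetLike.mul_mem_graded c.2 (hβ' j)
    simpa using this
  let f : ↥(𝒜 i) →ₗ[↥(𝒜 0)] (Fin N → ↥(𝒜 0)) :=
    { toFun := fun x j => ⟨(x : R) * α j, hmem0 j x⟩
      map_add' := fun x y => by funext j; exact Subtype.ext (by simp [add_mul])
      map_smul' := fun c x => by
        funext j
        refine Subtype.ext ?_
        show ((c • x : ↥(𝒜 i)) : R) * α j
          = ((c • (⟨(x : R) * α j, hmem0 j x⟩ : ↥(𝒜 0)) : ↥(𝒜 0)) : R)
        rw [coe_smul' 𝒜, mul_assoc]; rfl }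
  let g : (Fin N → ↥(𝒜 0)) →ₗ[↥(𝒜 0)] ↥(𝒜 i) :=
    { toFun := fun c => ∑ j, (⟨(c j : R) * β j, hmemi j (c j)⟩ : ↥(𝒜 i))
      map_add' := fun c d => by
        rw [← Finset.sum_add_distrib]
        refine Finset.sum_congr rfl fun j _ => Subtype.ext ?_
        simp [add_mul]
      map_smul' := fun a c => by
        refine Subtype.ext ?_
        show (((∑ j, (⟨((a • c) j : R) * β j, hmemi j ((a • c) j)⟩ : ↥(𝒜 i))) : ↥(𝒜 i)) : R)
          = ((a • ∑ j, (⟨(c j : R) * β j, hmemi j (c j)⟩ : ↥(𝒜 i)) : ↥(𝒜 i)) : R)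
        rw [coe_smul' 𝒜, AddSubgroup.val_finset_sum, AddSubgroup.val_finset_sum, Finset.mul_sum]
        refine Finset.sum_congr rfl fun j _ => ?_
        show ((a • c j : ↥(𝒜 0)) : R) * β j = (a : R) * ((c j : R) * β j)
        exact mul_assoc (a : R) (c j : R) (β j) }
  have hgf : ∀ x, g (f x) = x := by
    intro x
    refine Subtype.ext ?_
    show (((∑ j, (⟨((⟨(x : R) * α j, hmem0 j x⟩ : ↥(𝒜 0)) : R) * β j,
      hmemi j ⟨(x : R) * α j, hmem0 j x⟩⟩ : ↥(𝒜 i))) : ↥(𝒜 i)) : R) = (x : R)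
    rw [AddSubgroup.val_finset_sum]
    simp only [mul_assoc, ← Finset.mul_sum]
    rw [hs, mul_one]
  constructor
  · exact Module.Finite.of_surjective g (fun x => ⟨f x, hgf x⟩)
  · exact Module.Projective.of_split f g (LinearMap.ext hgf)

theorem pou_smul (a : ℤ) (h : HasPartitionOfUnity 𝒜 a) :
    ∀ m : ℕ, HasPartitionOfUnity 𝒜 ((m + 1 : ℕ) * a)
  | 0 => by simpa using h
  | (m + 1) => by
    have := pou_mul 𝒜 (pou_smul a h m) h
      (fun i j x hx y hy => SetLike.mul_mem_graded hx hy)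
    rwa [show ((m + 1 : ℕ) : ℤ) * a + a = ((m + 1 + 1 : ℕ) : ℤ) * a by push_cast; ring] at this

theorem components_fg_projective_of_pou' :
    (HasPartitionOfUnity 𝒜 1 → ∀ n : ℤ, 1 ≤ n →
      @Module.Finite ↥(𝒜 0) ↥(𝒜 (-n)) _ _ (gradeZeroModule 𝒜 (-n)) ∧
      @Module.Projective ↥(𝒜 0) _ ↥(𝒜 (-n)) _ (gradeZeroModule 𝒜 (-n))) ∧
    (HasPartitionOfUnity 𝒜 (-1) → ∀ n : ℤ, 1 ≤ n →
      @Module.Finite ↥(𝒜 0) ↥(𝒜 n) _ _ (gradeZeroModule 𝒜 n) ∧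
      @Module.Projective ↥(𝒜 0) _ ↥(𝒜 n) _ (gradeZeroModule 𝒜 n)) := by
  constructor
  · intro h n hn
    have hp := pou_smul 𝒜 1 h (n - 1).toNat
    rw [show (((n - 1).toNat + 1 : ℕ) : ℤ) * 1 = -(-n) by push_cast; omega] at hp
    exact fg_proj_of_pou 𝒜 (-n) hp
  · intro h n hn
    have hp := pou_smul 𝒜 (-1) h (n - 1).toNat
    rw [show (((n - 1).toNat + 1 : ℕ) : ℤ) * (-1) = -n by push_cast; omega] at hp
    exact fg_proj_of_pou 𝒜 n hp

end

/-- **Lemma.**  Let `R` be a `ℤ`-graded ring.  If `R` admits a partition of unity of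
type `(1, -1)`, then for every `n ≥ 1` the homogeneous component `R_{-n}` is a finitely
generated projective left `R₀`-module.  If `R` admits a partition of unity of type
`(-1, 1)`, then for every `n ≥ 1` the homogeneous component `R_n` is a finitely
generated projective left `R₀`-module. -/
theorem components_fg_projective_of_pou {R : Type*} [Ring R] (𝒜 : ℤ → AddSubgroup R)
    [GradedRing 𝒜] :
    (HasPartitionOfUnity 𝒜 1 → ∀ n : ℤ, 1 ≤ n →
      @Module.Finite ↥(𝒜 0) ↥(𝒜 (-n)) _ _ (gradeZeroModule 𝒜 (-n)) ∧
      @Module.Projective ↥(𝒜 0) _ ↥(𝒜 (-n)) _ (gradeZeroModule 𝒜 (-n))) ∧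
    (HasPartitionOfUnity 𝒜 (-1) → ∀ n : ℤ, 1 ≤ n →
      @Module.Finite ↥(𝒜 0) ↥(𝒜 n) _ _ (gradeZeroModule 𝒜 n) ∧
      @Module.Projective ↥(𝒜 0) _ ↥(𝒜 n) _ (gradeZeroModule 𝒜 n)) :=
  components_fg_projective_of_pou' 𝒜
end

section
/- Let R be a strongly ℤ-graded ring. Then for every n ∈ ℤ the homogeneous component R_n is a finitely generated projective left R_0-module. -/
theorem coe_grade_smul_aux {R : Type*} [Ring R] (𝒜 : ℤ → AddSubgroup R) [GradedRing 𝒜]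
    {i : ℤ} (a : 𝒜 0) (b : 𝒜 i) :
    ((@SMul.smul _ _ (GradedMonoid.GradeZero.smul (fun i => ↥(𝒜 i)) i) a b : 𝒜 i) : R)
      = ↑a * ↑b := by
  have key : ∀ (j : ℤ) (h : 0 + i = j) (x : ↥(𝒜 (0+i))),
      ((@Eq.rec ℤ (0+i) (fun a _ => ↥(𝒜 a)) x j h : 𝒜 j) : R) = x := by
    rintro j rfl x; rfl
  exact key i (zero_add i) _

theorem coe_grade_smul {R : Type*} [Ring R] (𝒜 : ℤ → AddSubgroup R) [GradedRing 𝒜]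
    {i : ℤ} (a : 𝒜 0) (b : 𝒜 i) :
    letI := gradeZeroModule 𝒜 i
    ((a • b : 𝒜 i) : R) = ↑a * ↑b :=
  coe_grade_smul_aux 𝒜 a b

/-- **Corollary.**  If `R` is a strongly `ℤ`-graded ring, then for every `n : ℤ` the
homogeneous component `R_n` is a finitely generated projective left `R₀`-module. -/
theorem components_fg_projective_of_stronglyGraded {R : Type*} [Ring R]
    (𝒜 : ℤ → AddSubgroup R) [GradedRing 𝒜]
    (hstrong : ∀ n : ℤ, HasPartitionOfUnity 𝒜 n) (n : ℤ) :
    @Module.Finite ↥(𝒜 0) ↥(𝒜 n) _ _ (gradeZeroModule 𝒜 n) ∧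
    @Module.Projective ↥(𝒜 0) _ ↥(𝒜 n) _ (gradeZeroModule 𝒜 n) := by
  letI := gradeZeroModule 𝒜 n
  obtain ⟨N, α, β, hα, hβ, hsum⟩ := hstrong (-n)
  have hβ' : ∀ j, β j ∈ 𝒜 n := fun j => by simpa using hβ j
  have hmemf : ∀ (x : ↥(𝒜 n)) (j : Fin N), (x : R) * α j ∈ 𝒜 0 := fun x j => by
    simpa using SetLike.mul_mem_graded x.2 (hα j)
  have hmemg : ∀ (c : Fin N → ↥(𝒜 0)) (j : Fin N), (c j : R) * β j ∈ 𝒜 n := fun c j => by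
    simpa using SetLike.mul_mem_graded (c j).2 (hβ' j)
  set f : ↥(𝒜 n) →ₗ[↥(𝒜 0)] (Fin N → ↥(𝒜 0)) :=
    { toFun := fun x j => ⟨(x : R) * α j, hmemf x j⟩
      map_add' := fun x y => by funext j; apply Subtype.ext; simpa using add_mul _ _ _
      map_smul' := fun r x => by
        funext j; apply Subtype.ext
        show ((r • x : ↥(𝒜 n)) : R) * α j = ((r * ⟨(x : R) * α j, hmemf x j⟩ : ↥(𝒜 0)) : R)
        rw [coe_grade_smul 𝒜 r x]
        show (r : R) * x * α j = (r : R) * ((x : R) * α j)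
        rw [mul_assoc] } with hf
  set g : (Fin N → ↥(𝒜 0)) →ₗ[↥(𝒜 0)] ↥(𝒜 n) :=
    { toFun := fun c => ∑ j, (⟨(c j : R) * β j, hmemg c j⟩ : ↥(𝒜 n))
      map_add' := fun c d => by
        rw [← Finset.sum_add_distrib]
        apply Finset.sum_congr rfl
        intro j _
        apply Subtype.ext
        show ((c + d) j : R) * β j = (c j : R) * β j + (d j : R) * β j
        simp [add_mul]
      map_smul' := fun r c => by
        apply Subtype.ext
        show ((∑ j, (⟨((r • c) j : R) * β j, hmemg _ j⟩ : ↥(𝒜 n)) : ↥(𝒜 n)) : R)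
          = ((r • (∑ j, (⟨(c j : R) * β j, hmemg c j⟩ : ↥(𝒜 n))) : ↥(𝒜 n)) : R)
        rw [coe_grade_smul 𝒜 r]
        rw [AddSubmonoidClass.coe_finset_sum, AddSubmonoidClass.coe_finset_sum,
          Finset.mul_sum]
        apply Finset.sum_congr rfl
        intro j _
        show ((r • c) j : R) * β j = (r : R) * ((c j : R) * β j)
        have : ((r • c) j : ↥(𝒜 0)) = r * c j := rfl
        rw [this]
        push_cast
        rw [mul_assoc] } with hg
  have hgf : g.comp f = LinearMap.id := by
    ext x
    show ((∑ j, (⟨((x : R) * α j) * β j, hmemg (fun j => ⟨(x : R) * α j, hmemf x j⟩) j⟩ : ↥(𝒜 n)) : ↥(𝒜 n)) : R) = (x : R)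
    rw [AddSubmonoidClass.coe_finset_sum]
    simp only [mul_assoc]
    rw [← Finset.mul_sum, hsum, mul_one]
  constructor
  · exact Module.Finite.of_surjective g
      (fun x => ⟨f x, LinearMap.congr_fun hgf x⟩)
  · exact Module.Projective.of_split f g hgf
end

section
/- Let K be a ring, let C and C′ be ℤ-indexed chain complexes of K-modules with differentials d and d′, and let g : C → C′ be an isomorphism of chain complexes. Then C is contractible if and only if g admits a proto-null homotopy, i.e. there exists a family of K-linear maps t_k : C_k → C′_{k+1} such that d′_{k+1} ∘ t_k + t_{k−1} ∘ d_k : C_k → C′_k is an isomorphism for every k ∈ ℤ. -/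
open CategoryTheory

/-- **Lemma (proto-null homotopies).**  Let `K` be a ring, let `C`, `C'` be `ℤ`-indexed
chain complexes of `K`-modules, and let `g : C ≅ C'` be an isomorphism of chain
complexes.  Then `C` is contractible (its identity map is chain homotopic to the zero
map) if and only if `g` admits a proto-null homotopy: a family of `K`-linear maps
`t k : C k → C' (k+1)` such that `d' ∘ t + t ∘ d : C k → C' k` is an isomorphism for
every `k : ℤ`. -/
theorem contractible_iff_protoNullHomotopy {K : Type} [Ring K]
    (C C' : ChainComplex (ModuleCat K) ℤ) (g : C ≅ C') :
    Nonempty (Homotopy (𝟙 C) 0) ↔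
      ∃ t : ∀ k : ℤ, C.X k ⟶ C'.X (k + 1), ∀ k : ℤ,
        IsIso (t k ≫ C'.d (k + 1) k +
          C.d k (k - 1) ≫ t (k - 1) ≫ eqToHom (congrArg C'.X (by omega))) := by
  constructor
  · rintro ⟨h⟩
    refine ⟨fun k => h.hom k (k + 1) ≫ g.hom.f (k + 1), fun k => ?_⟩
    have r₂₁ : (ComplexShape.down ℤ).Rel (k + 1) k := by simp
    have r₁₀ : (ComplexShape.down ℤ).Rel k (k - 1) := by simp
    have key : ∀ (j : ℤ) (e : j = k),
        h.hom (k - 1) j ≫ g.hom.f j ≫ eqToHom (congrArg C'.X e) =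
          h.hom (k - 1) k ≫ g.hom.f k := by
      rintro j rfl; simp
    have comm := h.comm k
    rw [dNext_eq h.hom r₁₀, prevD_eq h.hom r₂₁] at comm
    suffices heq : (h.hom k (k + 1) ≫ g.hom.f (k + 1)) ≫ C'.d (k + 1) k +
          C.d k (k - 1) ≫ (h.hom (k - 1) (k - 1 + 1) ≫ g.hom.f (k - 1 + 1)) ≫
            eqToHom (congrArg C'.X (by omega)) = g.hom.f k by
      rw [heq]
      exact (HomologicalComplex.Hom.isoApp g k).isIso_hom
    calc _ = (h.hom k (k + 1) ≫ C.d (k + 1) k + C.d k (k - 1) ≫ h.hom (k - 1) k) ≫ g.hom.f k := by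
          simp only [Category.assoc]
          rw [key (k - 1 + 1) (by omega), g.hom.comm (k + 1) k]
          simp [Preadditive.add_comp, Category.assoc]
      _ = g.hom.f k := by
          have comm' : h.hom k (k + 1) ≫ C.d (k + 1) k + C.d k (k - 1) ≫ h.hom (k - 1) k =
              𝟙 (C.X k) := by simpa [add_comm] using comm.symm
          rw [comm', Category.id_comp]
  · rintro ⟨t, ht⟩
    set hom : ∀ i j, (ComplexShape.down ℤ).Rel j i → (C.X i ⟶ C.X j) :=
      fun i j hij => t i ≫ eqToHom (congrArg C'.X hij) ≫ g.inv.f j with hom_def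
    set ψ : C ⟶ C := Homotopy.nullHomotopicMap' hom with hψ
    have hface : ∀ k : ℤ, IsIso (ψ.f k) := by
      intro k
      have r₂₁ : (ComplexShape.down ℤ).Rel (k + 1) k := by simp
      have r₁₀ : (ComplexShape.down ℤ).Rel k (k - 1) := by simp
      rw [hψ, Homotopy.nullHomotopicMap'_f r₂₁ r₁₀]
      have : C.d k (k - 1) ≫ hom (k - 1) k r₁₀ + hom k (k + 1) r₂₁ ≫ C.d (k + 1) k =
          (t k ≫ C'.d (k + 1) k +
            C.d k (k - 1) ≫ t (k - 1) ≫ eqToHom (congrArg C'.X (by omega))) ≫ g.inv.f k := by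
        rw [hom_def]
        simp only [eqToHom_refl, Category.id_comp, Preadditive.add_comp, Category.assoc]
        rw [g.inv.comm (k + 1) k]
        abel
      rw [this]
      haveI := ht k
      haveI : IsIso (g.inv.f k) := (HomologicalComplex.Hom.isoApp g k).isIso_inv
      infer_instance
    have : ∀ k : ℤ, IsIso (ψ.f k) := hface
    have hiso : IsIso ψ := HomologicalComplex.Hom.isIso_of_components ψ
    refine ⟨?_⟩
    have h0 : Homotopy ψ 0 := Homotopy.nullHomotopy' hom
    exact (Homotopy.ofEq (by simp)).trans (((h0.compLeft (inv ψ))).trans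
      (Homotopy.ofEq (by simp)))
end

section
/- Let K be a ring, Σ a collection of square matrices over K, and λ : K → L a universal Σ-inverting ring homomorphism. Then λ is an epimorphism in the category of unital rings: for any ring T and any ring homomorphisms α, β : L → T with α ∘ λ = β ∘ λ, one has α = β. -/
universe u v

/-- A ring homomorphism `f : K → S` is `Σ`-inverting for a collection `Σ` of square
matrices over `K` (one set `Σ n` of `n × n` matrices for each `n`) if the entrywise
image under `f` of every matrix in `Σ` is invertible over `S`. -/
def IsMatInverting {K : Type u} {S : Type v} [Ring K] [Ring S]
    (Sig : ∀ n : ℕ, Set (Matrix (Fin n) (Fin n) K)) (f : K →+* S) : Prop :=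
  ∀ (n : ℕ), ∀ A ∈ Sig n, IsUnit (A.map f)

/-- A `Σ`-inverting ring homomorphism `lam : K → L` is universal if every
`Σ`-inverting ring homomorphism `f : K → S` factors uniquely through it. -/
def IsUniversalMatInverting {K : Type u} {L : Type u} [Ring K] [Ring L]
    (Sig : ∀ n : ℕ, Set (Matrix (Fin n) (Fin n) K)) (lam : K →+* L) : Prop :=
  IsMatInverting Sig lam ∧
    ∀ (S : Type u) [Ring S] (f : K →+* S), IsMatInverting Sig f →
      ∃! g : L →+* S, g.comp lam = f

/-- **Proposition.**  A universal `Σ`-inverting ring homomorphism `lam : K → L` is an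
epimorphism in the category of unital rings: any two ring homomorphisms
`α, β : L → T` with `α ∘ lam = β ∘ lam` are equal. -/
theorem universal_inverting_epi {K L T : Type u} [Ring K] [Ring L] [Ring T]
    (Sig : ∀ n : ℕ, Set (Matrix (Fin n) (Fin n) K))
    (lam : K →+* L) (hlam : IsUniversalMatInverting Sig lam)
    (α β : L →+* T) (h : α.comp lam = β.comp lam) : α = β := by
  obtain ⟨hinv, huniv⟩ := hlam
  have hf : IsMatInverting Sig (α.comp lam) := by
    intro n A hA
    have : (A.map lam).map α = A.map (α.comp lam) := by
      ext i j; simp [Matrix.map_apply]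
    rw [← this, show (A.map lam).map α = α.mapMatrix (A.map lam) from rfl]
    exact (hinv n A hA).map α.mapMatrix
  obtain ⟨g, hg, hu⟩ := huniv T (α.comp lam) hf
  exact (hu α rfl).trans (hu β h.symm).symm
end

section
/- Let K be a ring, Σ a collection of square matrices over K, and f : K → S a ring homomorphism. Let f_*(Σ) be the collection of matrices f(A) (entrywise application of f) for A ∈ Σ. Suppose λ : K → L is a universal Σ-inverting ring homomorphism, λ′ : S → L′ is a universal f_*(Σ)-inverting ring homomorphism, and f̄ : L → L′ is a ring homomorphism with f̄ ∘ λ = λ′ ∘ f. Then the resulting commutative square is a pushout of unital rings: for every ring T and all ring homomorphisms β : S → T and α : L → T with α ∘ λ = β ∘ f, there is a unique ring homomorphism υ : L′ → T with υ ∘ λ′ = β and υ ∘ f̄ = α. -/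
universe u v

/-- **Proposition (pushout by localisation).**  Let `Σ` be a collection of square
matrices over `K` and `f : K → S` a ring homomorphism; let `f₊Σ` be the collection
of entrywise images under `f` of matrices in `Σ`.  Suppose `lam : K → L` is a
universal `Σ`-inverting homomorphism, `lam' : S → L'` is a universal
`f₊Σ`-inverting homomorphism, and `fbar : L → L'` satisfies `fbar ∘ lam = lam' ∘ f`.
Then the resulting commutative square is a pushout of unital rings: for every ring
`T` and homomorphisms `β : S → T`, `α : L → T` with `α ∘ lam = β ∘ f` there is a
unique `υ : L' → T` with `υ ∘ lam' = β` and `υ ∘ fbar = α`. -/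
theorem localisation_pushout {K S L L' : Type u} [Ring K] [Ring S] [Ring L] [Ring L']
    (Sig : ∀ n : ℕ, Set (Matrix (Fin n) (Fin n) K)) (f : K →+* S)
    (lam : K →+* L) (hlam : IsUniversalMatInverting Sig lam)
    (lam' : S →+* L')
    (hlam' : IsUniversalMatInverting
      (fun n => (fun A : Matrix (Fin n) (Fin n) K => A.map f) '' (Sig n)) lam')
    (fbar : L →+* L') (hsq : fbar.comp lam = lam'.comp f)
    (T : Type u) [Ring T] (β : S →+* T) (α : L →+* T)
    (hαβ : α.comp lam = β.comp f) :
    ∃! υ : L' →+* T, υ.comp lam' = β ∧ υ.comp fbar = α := by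
  -- β is f₊Σ-inverting
  have hβ : IsMatInverting
      (fun n => (fun A : Matrix (Fin n) (Fin n) K => A.map f) '' (Sig n)) β := by
    rintro n B ⟨A, hA, rfl⟩
    have h1 : IsUnit (A.map lam) := hlam.1 n A hA
    have h2 : IsUnit (α.mapMatrix (A.map lam)) := (α.mapMatrix).isUnit_map h1
    have h3 : α.mapMatrix (A.map lam) = (A.map f).map β := by
      simp only [RingHom.mapMatrix_apply, Matrix.map_map]
      have : (⇑α ∘ ⇑lam : K → T) = ⇑β ∘ ⇑f := by
        funext x; exact congrArg (fun g : K →+* T => g x) hαβ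
      rw [this]
    rwa [h3] at h2
  obtain ⟨υ, hυ, huniq⟩ := hlam'.2 T β hβ
  refine ⟨υ, ⟨hυ, ?_⟩, fun υ' hυ' => huniq υ' hυ'.1⟩
  -- υ ∘ fbar = α by uniqueness of factorization through lam
  have hβf : IsMatInverting Sig (β.comp f) := by
    intro n A hA
    have := hβ n (A.map f) ⟨A, hA, rfl⟩
    rwa [Matrix.map_map] at this
  obtain ⟨g, hg, hguniq⟩ := hlam.2 T (β.comp f) hβf
  have h1 : (υ.comp fbar).comp lam = β.comp f := by
    rw [RingHom.comp_assoc, hsq, ← RingHom.comp_assoc, hυ]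
  rw [hguniq _ h1, hguniq α hαβ]
end
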